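/- Let s > 0. Define T(z) = −s + √(s² + z²) and ε(z) = z/√(s² + z²) for z ∈ ℝ. Define F : (0,∞) × S¹ × ℝ → ℝ × ℝ² × ℝ by F(t, θ, z) = (T(z) + t, t√(1 − ε(z)²) θ, z + t ε(z)), where S¹ = {θ ∈ ℝ² : |θ| = 1}. Then F is injective. -/

import Mathlib

open Matrix

/-- `T(z) = -s + √(s² + z²)`, the time coordinate of the filament. -/
noncomputable def Tfil (s z : ℝ) : ℝ := -s + Real.sqrt (s ^ 2 + z ^ 2)

/-- `ε(z) = z / √(s² + z²) = T'(z)`. -/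
noncomputable def epsFil (s z : ℝ) : ℝ := z / Real.sqrt (s ^ 2 + z ^ 2)

/-- Appendix C of the paper: the parametrization
`F(t, θ, z) = (T(z) + t, t√(1-ε(z)²) θ, z + t ε(z))` of the projection of the future
flowout of the conormal bundle of the filament is injective on `(0,∞) × S¹ × ℝ`. -/
theorem stmt_8 (s : ℝ) (hs : 0 < s) (t₁ t₂ : ℝ) (θ₁ θ₂ : Fin 2 → ℝ) (z₁ z₂ : ℝ)
    (ht₁ : 0 < t₁) (ht₂ : 0 < t₂) (hθ₁ : θ₁ ⬝ᵥ θ₁ = 1) (hθ₂ : θ₂ ⬝ᵥ θ₂ = 1)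
    (h : (Tfil s z₁ + t₁, (t₁ * Real.sqrt (1 - epsFil s z₁ ^ 2)) • θ₁,
            z₁ + t₁ * epsFil s z₁)
        = (Tfil s z₂ + t₂, (t₂ * Real.sqrt (1 - epsFil s z₂ ^ 2)) • θ₂,
            z₂ + t₂ * epsFil s z₂)) :
    t₁ = t₂ ∧ θ₁ = θ₂ ∧ z₁ = z₂ := by
  simp only [Prod.mk.injEq] at h
  obtain ⟨h1, h2, h3⟩ := h
  set r₁ := Real.sqrt (s ^ 2 + z₁ ^ 2) with hr₁def
  set r₂ := Real.sqrt (s ^ 2 + z₂ ^ 2) with hr₂def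
  have hr₁ : 0 < r₁ := Real.sqrt_pos.mpr (by positivity)
  have hr₂ : 0 < r₂ := Real.sqrt_pos.mpr (by positivity)
  have hsq₁ : r₁ ^ 2 = s ^ 2 + z₁ ^ 2 := Real.sq_sqrt (by positivity)
  have hsq₂ : r₂ ^ 2 = s ^ 2 + z₂ ^ 2 := Real.sq_sqrt (by positivity)
  have he₁ : Real.sqrt (1 - epsFil s z₁ ^ 2) = s / r₁ := by
    have : 1 - epsFil s z₁ ^ 2 = (s / r₁) ^ 2 := by
      unfold epsFil
      rw [← hr₁def]
      field_simp
      linarith [hsq₁]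
    rw [this, Real.sqrt_sq (by positivity)]
  have he₂ : Real.sqrt (1 - epsFil s z₂ ^ 2) = s / r₂ := by
    have : 1 - epsFil s z₂ ^ 2 = (s / r₂) ^ 2 := by
      unfold epsFil
      rw [← hr₂def]
      field_simp
      linarith [hsq₂]
    rw [this, Real.sqrt_sq (by positivity)]
  rw [he₁, he₂] at h2
  have hc₁ : 0 < t₁ * (s / r₁) := by positivity
  have hc₂ : 0 < t₂ * (s / r₂) := by positivity
  -- dot product of h2 with itself
  have hdot := congrArg (fun v => v ⬝ᵥ v) h2
  simp only [smul_dotProduct, dotProduct_smul, hθ₁, hθ₂,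
    smul_eq_mul, mul_one] at hdot
  have hceq : t₁ * (s / r₁) = t₂ * (s / r₂) := by nlinarith [hdot, hc₁, hc₂]
  have hθ : θ₁ = θ₂ := by
    rw [hceq] at h2
    exact smul_right_injective (Fin 2 → ℝ) (ne_of_gt hc₂) h2
  -- from hceq : t₁ * r₂ = t₂ * r₁
  have htr : t₁ * r₂ = t₂ * r₁ := by
    have h' : s * (t₁ * r₂) = s * (t₂ * r₁) := by
      field_simp at hceq
      linear_combination s * hceq
    exact mul_left_cancel₀ hs.ne' h'
  have h1' : r₁ + t₁ = r₂ + t₂ := by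
    unfold Tfil at h1
    rw [← hr₁def, ← hr₂def] at h1
    linarith
  have hrr : r₁ = r₂ := by
    have key : (r₂ + t₂) * (r₂ - r₁) = 0 := by linear_combination htr - r₂ * h1'
    rcases mul_eq_zero.mp key with hk | hk
    · linarith
    · linarith
  have htt : t₁ = t₂ := by linarith
  have hz : z₁ = z₂ := by
    unfold epsFil at h3
    rw [← hr₁def, ← hr₂def] at h3
    rw [hrr, htt] at h3
    have h3' : z₁ * (r₂ + t₂) = z₂ * (r₂ + t₂) := by
      field_simp at h3
      linear_combination (r₂ + t₂) * h3
    exact mul_right_cancel₀ (by positivity) h3'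
  exact ⟨htt, hθ, hz⟩
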